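/- Let F be a field, d ≥ 2, and let g ∈ F((x^{-1})) satisfy P*(x) g(x^d) = g(x) with P* monic of degree d-1, and suppose g is badly approximable so that all partial quotients are linear: g = K_{i=1}^∞ β_i/(x + α_i). Then for every k ≥ 0 the continuant identity K^1_d(a_{dk+1},...,a_{d(k+1)}; β_{dk+1},...,β_{d(k+1)}) = β_{dk+1} P*(x) holds, where a_i(x) = x + α_i. -/

import Mathlib

open Polynomial
open scoped Classical

noncomputable section

variable {F : Type*} [Field F]

/-- The element `x = T⁻¹` of `F((T))`. -/
def xx : LaurentSeries F := ((PowerSeries.X : PowerSeries F) : LaurentSeries F)⁻¹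

/-- Evaluation of a polynomial in the variable `x` inside `F((x⁻¹))`. -/
def pev (p : Polynomial F) : LaurentSeries F := Polynomial.aeval (xx : LaurentSeries F) p

/-- Degree valuation `‖f‖` on `F((x⁻¹))`, with `‖0‖ = ⊥`. -/
def degB (f : LaurentSeries F) : WithBot ℤ := if f = 0 then ⊥ else (-(f.order) : ℤ)

/-- Substitution `x ↦ x^d` (equivalently `T ↦ T^d`) on Laurent series. -/
def lsubst (d : ℕ) (f : LaurentSeries F) : LaurentSeries F :=
  if h : 0 < d then
    HahnSeries.embDomain
      (OrderEmbedding.ofStrictMono (fun n : ℤ => (d : ℤ) * n)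
        (fun _ _ hab => mul_lt_mul_of_pos_left hab (by exact_mod_cast h))) f
  else 0

/-- Generalized continuants: `contK i₋₁ i₀ a b (n+1) = K_n(a_1,…,a_n; b_1,…,b_n)`. -/
def contK (iₘ i₀ : Polynomial F) (a : ℕ → Polynomial F) (b : ℕ → F) : ℕ → Polynomial F
  | 0 => iₘ
  | 1 => i₀
  | n + 2 => a (n + 1) * contK iₘ i₀ a b (n + 1) + Polynomial.C (b (n + 1)) * contK iₘ i₀ a b n

/-- Numerators of the modified continued fraction `K β_i/(x+α_i)`, shifted:
`cfPab α β (n+1) = p_n`, with `p_{-1} = 1`, `p_0 = 0`. -/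
def cfPab (α β : ℕ → F) : ℕ → Polynomial F
  | 0 => 1
  | 1 => 0
  | n + 2 => (Polynomial.X + Polynomial.C (α (n + 1))) * cfPab α β (n + 1) +
      Polynomial.C (β (n + 1)) * cfPab α β n

/-- Denominators of the modified continued fraction, shifted: `cfQab α β (n+1) = q_n`. -/
def cfQab (α β : ℕ → F) : ℕ → Polynomial F
  | 0 => 0
  | 1 => 1
  | n + 2 => (Polynomial.X + Polynomial.C (α (n + 1))) * cfQab α β (n + 1) +
      Polynomial.C (β (n + 1)) * cfQab α β n

lemma xx_eq : (xx : LaurentSeries F) = HahnSeries.single (-1 : ℤ) 1 := by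
  have h1 : ((PowerSeries.X : PowerSeries F) : LaurentSeries F) = HahnSeries.single (1 : ℤ) 1 :=
    HahnSeries.ofPowerSeries_X
  rw [xx, h1]
  refine inv_eq_of_mul_eq_one_right ?_
  rw [HahnSeries.single_mul_single, one_mul]
  norm_num

lemma aeval_single_eq (e : ℤ) (p : Polynomial F) :
    Polynomial.aeval (HahnSeries.single e (1:F) : LaurentSeries F) p =
      p.sum fun i a => HahnSeries.single (e * i) a := by
  rw [Polynomial.aeval_def, Polynomial.eval₂_eq_sum]
  refine Finset.sum_congr rfl fun i _ => ?_
  dsimp only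
  rw [HahnSeries.single_pow, one_pow]
  rw [show (algebraMap F (HahnSeries ℤ F)) (p.coeff i) = HahnSeries.single (0:ℤ) (p.coeff i) by
    rw [HahnSeries.algebraMap_apply', PowerSeries.algebraMap_apply, HahnSeries.ofPowerSeries_C,
      HahnSeries.C_apply]; simp]
  rw [HahnSeries.single_mul_single, zero_add, mul_one, nsmul_eq_mul]
  ring_nf

lemma pev_sum (p : Polynomial F) :
    pev p = p.sum fun i a => HahnSeries.single (-(i:ℤ)) a := by
  rw [pev, xx_eq]
  have := aeval_single_eq (-1 : ℤ) p
  simpa using this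

lemma pev_coeff_neg (p : Polynomial F) (j : ℕ) :
    (pev p).coeff (-(j:ℤ)) = p.coeff j := by
  rw [pev_sum]
  rw [Polynomial.sum]
  rw [show ((∑ i ∈ p.support, HahnSeries.single (-(i:ℤ)) (p.coeff i)).coeff (-(j:ℤ)))
    = ∑ i ∈ p.support, (HahnSeries.single (-(i:ℤ)) (p.coeff i)).coeff (-(j:ℤ)) from ?_]
  · rw [Finset.sum_eq_single j]
    · simp
    · intro i _ hij
      apply HahnSeries.coeff_single_of_ne
      simpa using fun h => hij (by exact_mod_cast h.symm)
    · intro hj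
      simp [Polynomial.notMem_support_iff.mp hj]
  · induction p.support using Finset.induction with
    | empty => simp
    | insert _ _ h ih => simp [Finset.sum_insert h, ih]

lemma pev_coeff_pos (p : Polynomial F) (n : ℤ) (hn : 0 < n) : (pev p).coeff n = 0 := by
  rw [pev_sum, Polynomial.sum]
  rw [show ((∑ i ∈ p.support, HahnSeries.single (-(i:ℤ)) (p.coeff i)).coeff n)
    = ∑ i ∈ p.support, (HahnSeries.single (-(i:ℤ)) (p.coeff i)).coeff n from ?_]
  · refine Finset.sum_eq_zero fun i _ => ?_
    apply HahnSeries.coeff_single_of_ne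
    omega
  · induction p.support using Finset.induction with
    | empty => simp
    | insert _ _ h ih => simp [Finset.sum_insert h, ih]

lemma coeff_eq_zero_of_degB_le {f : LaurentSeries F} {c : ℤ} (h : degB f ≤ (c : WithBot ℤ))
    {n : ℤ} (hn : n < -c) : f.coeff n = 0 := by
  by_cases hf : f = 0
  · simp [hf]
  · rw [degB, if_neg hf] at h
    have h2 : -f.order ≤ c := by exact_mod_cast h
    exact HahnSeries.coeff_eq_zero_of_lt_order (by omega)

lemma degB_le_of_forall {f : LaurentSeries F} {c : ℤ}
    (h : ∀ n : ℤ, n < -c → f.coeff n = 0) : degB f ≤ (c : WithBot ℤ) := by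
  by_cases hf : f = 0
  · simp [degB, hf]
  · rw [degB, if_neg hf]
    refine WithBot.coe_le_coe.mpr ?_
    by_contra hlt
    push_neg at hlt
    exact (mt HahnSeries.coeff_order_eq_zero.mp hf) (h _ (by omega))

lemma degB_mul_le {f g : LaurentSeries F} {a b : ℤ} (hf : degB f ≤ (a : WithBot ℤ))
    (hg : degB g ≤ (b : WithBot ℤ)) : degB (f * g) ≤ ((a + b : ℤ) : WithBot ℤ) := by
  by_cases h1 : f = 0
  · simp [h1, degB]
  by_cases h2 : g = 0
  · simp [h2, degB]
  have h3 : f * g ≠ 0 := mul_ne_zero h1 h2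
  rw [degB, if_neg h1] at hf
  rw [degB, if_neg h2] at hg
  rw [degB, if_neg h3, HahnSeries.order_mul h1 h2]
  have hf' : -f.order ≤ a := by exact_mod_cast hf
  have hg' : -g.order ≤ b := by exact_mod_cast hg
  exact_mod_cast (by omega : -(f.order + g.order) ≤ a + b)

lemma degB_add_le {f g : LaurentSeries F} {c : ℤ} (hf : degB f ≤ (c : WithBot ℤ))
    (hg : degB g ≤ (c : WithBot ℤ)) : degB (f + g) ≤ (c : WithBot ℤ) :=
  degB_le_of_forall fun n hn => by
    rw [HahnSeries.coeff_add, coeff_eq_zero_of_degB_le hf hn,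
      coeff_eq_zero_of_degB_le hg hn, add_zero]

lemma degB_neg_le {f : LaurentSeries F} {c : ℤ} (hf : degB f ≤ (c : WithBot ℤ)) :
    degB (-f) ≤ (c : WithBot ℤ) :=
  degB_le_of_forall fun n hn => by
    rw [HahnSeries.coeff_neg, coeff_eq_zero_of_degB_le hf hn, neg_zero]

lemma degB_pev_le (p : Polynomial F) : degB (pev p) ≤ ((p.natDegree : ℤ) : WithBot ℤ) := by
  refine degB_le_of_forall fun n hn => ?_
  obtain ⟨j, rfl⟩ : ∃ j : ℕ, n = -(j:ℤ) := ⟨(-n).toNat, by omega⟩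
  rw [pev_coeff_neg]
  exact Polynomial.coeff_eq_zero_of_natDegree_lt (by omega)

lemma pev_ne_zero {p : Polynomial F} (hp : p ≠ 0) : pev p ≠ 0 := by
  intro h
  apply hp
  have h2 := pev_coeff_neg p p.natDegree
  rw [h] at h2
  simp only [HahnSeries.coeff_zero] at h2
  exact Polynomial.leadingCoeff_eq_zero.mp h2.symm

lemma eq_zero_of_degB_pev {D : Polynomial F} (h : degB (pev D) ≤ ((-1 : ℤ) : WithBot ℤ)) :
    D = 0 := by
  by_contra hD
  have h1 := coeff_eq_zero_of_degB_le h (n := -(D.natDegree : ℤ)) (by omega)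
  rw [pev_coeff_neg] at h1
  exact hD (Polynomial.leadingCoeff_eq_zero.mp h1)

lemma lsubst_coeff {d : ℕ} (hd : 0 < d) (f : LaurentSeries F) (n : ℤ) :
    (lsubst d f).coeff ((d:ℤ) * n) = f.coeff n := by
  rw [lsubst, dif_pos hd]
  exact HahnSeries.embDomain_coeff

lemma lsubst_coeff_nr {d : ℕ} (hd : 0 < d) (f : LaurentSeries F) (m : ℤ)
    (h : ∀ n : ℤ, (d:ℤ) * n ≠ m) : (lsubst d f).coeff m = 0 := by
  rw [lsubst, dif_pos hd]
  refine HahnSeries.embDomain_notin_range ?_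
  rintro ⟨n, hn⟩
  exact h n hn

lemma lsubst_degB_le {d : ℕ} (hd : 0 < d) {f : LaurentSeries F} {c : ℤ}
    (hf : degB f ≤ (c : WithBot ℤ)) :
    degB (lsubst d f) ≤ (((d:ℤ) * c : ℤ) : WithBot ℤ) := by
  refine degB_le_of_forall fun m hm => ?_
  by_cases h : ∃ n : ℤ, (d:ℤ) * n = m
  · obtain ⟨n, rfl⟩ := h
    rw [lsubst_coeff hd]
    refine coeff_eq_zero_of_degB_le hf ?_
    have hd' : (0:ℤ) < (d:ℤ) := by exact_mod_cast hd
    nlinarith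
  · push_neg at h
    exact lsubst_coeff_nr hd f m h

lemma lsubst_add {d : ℕ} (hd : 0 < d) (f g : LaurentSeries F) :
    lsubst d (f + g) = lsubst d f + lsubst d g := by
  simp only [lsubst, dif_pos hd]
  exact HahnSeries.embDomain_add _ f g

lemma lsubst_mul {d : ℕ} (hd : 0 < d) (f g : LaurentSeries F) :
    lsubst d (f * g) = lsubst d f * lsubst d g := by
  simp only [lsubst, dif_pos hd]
  exact HahnSeries.embDomain_mul _ (fun x y => mul_add _ _ _) f g

lemma lsubst_single {d : ℕ} (hd : 0 < d) (a : ℤ) (r : F) :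
    lsubst d (HahnSeries.single a r) = HahnSeries.single ((d:ℤ) * a) r := by
  rw [lsubst, dif_pos hd]
  exact HahnSeries.embDomain_single

lemma lsubst_sum {d : ℕ} (hd : 0 < d) {ι : Type*} (s : Finset ι)
    (f : ι → LaurentSeries F) :
    lsubst d (∑ i ∈ s, f i) = ∑ i ∈ s, lsubst d (f i) := by
  induction s using Finset.induction with
  | empty => simp [lsubst, dif_pos hd]
  | insert _ _ h ih => rw [Finset.sum_insert h, Finset.sum_insert h, lsubst_add hd, ih]

lemma xx_pow (m : ℕ) : (xx : LaurentSeries F) ^ m = HahnSeries.single (-(m:ℤ)) 1 := by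
  rw [xx_eq, HahnSeries.single_pow, one_pow, nsmul_eq_mul]
  ring_nf

lemma lsubst_pev {d : ℕ} (hd : 0 < d) (p : Polynomial F) :
    lsubst d (pev p) = pev (p.comp (Polynomial.X ^ d)) := by
  have hx : Polynomial.aeval (xx : LaurentSeries F) ((Polynomial.X : Polynomial F) ^ d)
      = HahnSeries.single (-(d:ℤ)) 1 := by
    simp [xx_pow]
  rw [show pev (p.comp (Polynomial.X ^ d)) = Polynomial.aeval ((xx : LaurentSeries F)) (p.comp (Polynomial.X ^ d)) from rfl,
    Polynomial.aeval_comp, hx, aeval_single_eq, pev_sum, Polynomial.sum,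
    Polynomial.sum, lsubst_sum hd]
  refine Finset.sum_congr rfl fun i _ => ?_
  rw [lsubst_single hd]
  congr 1
  ring_nf

lemma natcast_lt_withBot {a b : ℕ} (h : a < b) :
    ((a : ℕ) : WithBot ℕ) < ((b : ℕ) : WithBot ℕ) := by exact_mod_cast h

lemma natcast_le_withBot {a b : ℕ} (h : a ≤ b) :
    ((a : ℕ) : WithBot ℕ) ≤ ((b : ℕ) : WithBot ℕ) := by exact_mod_cast h

lemma one_add_cast_withBot (n : ℕ) :
    (1 : WithBot ℕ) + ((n : ℕ) : WithBot ℕ) = (((n+1 : ℕ)) : WithBot ℕ) := by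
  push_cast
  ring

lemma degree_C_mul_le' (v : F) (q : Polynomial F) : (C v * q).degree ≤ q.degree := by
  rw [degree_mul]
  calc (C v).degree + q.degree ≤ 0 + q.degree := add_le_add degree_C_le le_rfl
    _ = q.degree := zero_add _

lemma monic_step {q1 q0 : Polynomial F} {n : ℕ} (u v : F) (h1 : q1.Monic)
    (hd1 : q1.degree = ((n+1 : ℕ) : WithBot ℕ)) (hd0 : q0.degree ≤ ((n : ℕ) : WithBot ℕ)) :
    ((X + C u) * q1 + C v * q0).Monic ∧
      ((X + C u) * q1 + C v * q0).degree = ((n+2 : ℕ) : WithBot ℕ) := by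
  have hm : ((X + C u) * q1).Monic := (monic_X_add_C u).mul h1
  have hdeg : ((X + C u) * q1).degree = ((n+2 : ℕ) : WithBot ℕ) := by
    rw [degree_mul, degree_X_add_C, hd1, one_add_cast_withBot]
  have hlt : (C v * q0).degree < ((X + C u) * q1).degree := by
    rw [hdeg]
    exact lt_of_le_of_lt (le_trans (degree_C_mul_le' v q0) hd0) (natcast_lt_withBot (by omega))
  exact ⟨hm.add_of_left hlt, by rw [degree_add_eq_left_of_degree_lt hlt, hdeg]⟩

lemma cfQab_spec (α β : ℕ → F) (n : ℕ) :
    (cfQab α β (n+1)).Monic ∧ (cfQab α β (n+1)).degree = (n : ℕ) := by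
  induction n using Nat.strong_induction_on with
  | _ n ih =>
    match n with
    | 0 => exact ⟨monic_one, degree_one⟩
    | 1 =>
      have : cfQab α β 2 = X + C (α 1) := by
        show (X + C (α 1)) * 1 + C (β 1) * 0 = X + C (α 1)
        ring
      rw [this]
      exact ⟨monic_X_add_C _, degree_X_add_C _⟩
    | (n+2) =>
      obtain ⟨h1, hd1⟩ := ih (n+1) (by omega)
      obtain ⟨_, hd0⟩ := ih n (by omega)
      have e : cfQab α β (n+3) =
          (X + C (α (n+2))) * cfQab α β (n+2) + C (β (n+2)) * cfQab α β (n+1) := rfl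
      rw [e]
      exact monic_step _ _ h1 hd1 (le_of_eq hd0)

lemma cfQab_natDegree (α β : ℕ → F) (n : ℕ) : (cfQab α β (n+1)).natDegree = n :=
  Polynomial.natDegree_eq_of_degree_eq_some (cfQab_spec α β n).2

lemma wronsk (α β : ℕ → F) (hβ : ∀ n, 1 ≤ n → β n ≠ 0) (n : ℕ) :
    ∃ c : F, c ≠ 0 ∧
      cfPab α β (n+1) * cfQab α β n - cfPab α β n * cfQab α β (n+1) = C c := by
  induction n with
  | zero => exact ⟨-1, by norm_num, by simp [cfPab, cfQab]⟩
  | succ n ih =>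
    obtain ⟨c, hc, hw⟩ := ih
    refine ⟨-(β (n+1)) * c, mul_ne_zero (neg_ne_zero.mpr (hβ _ (by omega))) hc, ?_⟩
    have e1 : cfPab α β (n+2) =
        (X + C (α (n+1))) * cfPab α β (n+1) + C (β (n+1)) * cfPab α β n := rfl
    have e2 : cfQab α β (n+2) =
        (X + C (α (n+1))) * cfQab α β (n+1) + C (β (n+1)) * cfQab α β n := rfl
    rw [e1, e2, map_mul, map_neg]
    linear_combination (-(C (β (n+1))) : Polynomial F) * hw

lemma coprime_PQ (α β : ℕ → F) (hβ : ∀ n, 1 ≤ n → β n ≠ 0) (n : ℕ) :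
    IsCoprime (cfPab α β (n+1)) (cfQab α β (n+1)) := by
  obtain ⟨c, hc, hw⟩ := wronsk α β hβ n
  refine ⟨C c⁻¹ * cfQab α β n, -(C c⁻¹ * cfPab α β n), ?_⟩
  have h1 : (C c⁻¹ : Polynomial F) * C c = 1 := by
    rw [← C_mul, inv_mul_cancel₀ hc, C_1]
  linear_combination (C c⁻¹ : Polynomial F) * hw + h1

lemma coprime_PP (α β : ℕ → F) (hβ : ∀ n, 1 ≤ n → β n ≠ 0) (n : ℕ) :
    IsCoprime (cfPab α β (n+1)) (cfPab α β n) := by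
  obtain ⟨c, hc, hw⟩ := wronsk α β hβ n
  refine ⟨C c⁻¹ * cfQab α β n, -(C c⁻¹ * cfQab α β (n+1)), ?_⟩
  have h1 : (C c⁻¹ : Polynomial F) * C c = 1 := by
    rw [← C_mul, inv_mul_cancel₀ hc, C_1]
  linear_combination (C c⁻¹ : Polynomial F) * hw + h1

lemma contK_split (α β : ℕ → F) (m : ℕ) (n : ℕ) :
    cfPab α β (m + 1 + n) =
      contK 0 1 (fun j => X + C (α (m + j))) (fun j => β (m + j)) (n+1) * cfPab α β (m+1)
      + contK 1 0 (fun j => X + C (α (m + j))) (fun j => β (m + j)) (n+1) * cfPab α β m := by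
  induction n using Nat.strong_induction_on with
  | _ n ih =>
    match n with
    | 0 => simp [contK]
    | 1 =>
      have e1 : cfPab α β (m+2) =
          (X + C (α (m+1))) * cfPab α β (m+1) + C (β (m+1)) * cfPab α β m := rfl
      have e2 : contK 0 1 (fun j => X + C (α (m + j))) (fun j => β (m + j)) 2
          = X + C (α (m+1)) := by
        show (X + C (α (m + 1))) * 1 + C (β (m + 1)) * 0 = _
        ring
      have e3 : contK 1 0 (fun j => X + C (α (m + j))) (fun j => β (m + j)) 2
          = C (β (m+1)) := by
        show (X + C (α (m + 1))) * 0 + C (β (m + 1)) * 1 = _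
        ring
      rw [show m + 1 + 1 = m + 2 from rfl, e1, e2, e3]
    | (n+2) =>
      have h1 := ih (n+1) (by omega)
      have h0 := ih n (by omega)
      have e1 : cfPab α β (m + n + 3) = (X + C (α (m+n+2))) * cfPab α β (m+n+2)
          + C (β (m+n+2)) * cfPab α β (m+n+1) := rfl
      have e2 : ∀ iₘ i₀ : Polynomial F,
          contK iₘ i₀ (fun j => X + C (α (m + j))) (fun j => β (m + j)) (n+3)
          = (X + C (α (m+(n+2)))) *
              contK iₘ i₀ (fun j => X + C (α (m + j))) (fun j => β (m + j)) (n+2)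
            + C (β (m+(n+2))) *
              contK iₘ i₀ (fun j => X + C (α (m + j))) (fun j => β (m + j)) (n+1) :=
        fun _ _ => rfl
      have hm3 : m + 1 + (n+2) = m + n + 3 := by omega
      have hm2 : m + 1 + (n+1) = m + n + 2 := by omega
      have hm1 : m + 1 + n = m + n + 1 := by omega
      rw [hm3, e1, e2, e2]
      rw [hm2] at h1
      rw [hm1] at h0
      rw [h1, h0]
      have : m + (n + 2) = m + n + 2 := by omega
      rw [this]
      ring

lemma contK10_deg (a : ℕ → F) (b : ℕ → F) (n : ℕ) :
    (contK 1 0 (fun j => X + C (a j)) b (n+1)).degree < (n : ℕ) := by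
  induction n using Nat.strong_induction_on with
  | _ n ih =>
    match n with
    | 0 => exact bot_lt_iff_ne_bot.mpr (by simp [contK])
    | 1 =>
      have e : contK 1 0 (fun j => X + C (a j)) b 2 = C (b 1) := by
        show (X + C (a 1)) * 0 + C (b 1) * 1 = _
        ring
      rw [e]
      exact lt_of_le_of_lt degree_C_le (by exact_mod_cast WithBot.coe_lt_coe.mpr one_pos)
    | (n+2) =>
      have h1 := ih (n+1) (by omega)
      have h0 := ih n (by omega)
      have e : contK 1 0 (fun j => X + C (a j)) b (n+3)
          = (X + C (a (n+2))) * contK 1 0 (fun j => X + C (a j)) b (n+2)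
            + C (b (n+2)) * contK 1 0 (fun j => X + C (a j)) b (n+1) := rfl
      rw [e]
      refine lt_of_le_of_lt (degree_add_le _ _) (max_lt ?_ ?_)
      · rw [degree_mul, degree_X_add_C]
        calc (1 : WithBot ℕ) + (contK 1 0 (fun j => X + C (a j)) b (n+2)).degree
            < 1 + ((n+1 : ℕ) : WithBot ℕ) := WithBot.add_lt_add_left (by simp) h1
          _ = ((n+2 : ℕ) : WithBot ℕ) := one_add_cast_withBot (n+1)
      · exact lt_of_le_of_lt (le_trans (degree_C_mul_le' _ _) (le_of_lt h0))
          (natcast_lt_withBot (by omega))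

lemma contK10_coeff (a : ℕ → F) (b : ℕ → F) (n : ℕ) :
    (contK 1 0 (fun j => X + C (a j)) b (n+2)).coeff n = b 1 := by
  induction n with
  | zero =>
    have e : contK 1 0 (fun j => X + C (a j)) b 2 = C (b 1) := by
      show (X + C (a 1)) * 0 + C (b 1) * 1 = _
      ring
    rw [e, coeff_C_zero]
  | succ n ih =>
    have e : contK 1 0 (fun j => X + C (a j)) b (n+3)
        = (X + C (a (n+2))) * contK 1 0 (fun j => X + C (a j)) b (n+2)
          + C (b (n+2)) * contK 1 0 (fun j => X + C (a j)) b (n+1) := rfl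
    rw [e]
    have hd2 : (contK 1 0 (fun j => X + C (a j)) b (n+2)).degree < ((n+1 : ℕ) : WithBot ℕ) :=
      contK10_deg a b (n+1)
    have hd1 : (contK 1 0 (fun j => X + C (a j)) b (n+1)).degree < ((n+1 : ℕ) : WithBot ℕ) :=
      lt_of_lt_of_le (contK10_deg a b n) (by exact_mod_cast WithBot.coe_le_coe.mpr (by omega))
    rw [coeff_add, add_mul, coeff_add]
    rw [coeff_X_mul]
    rw [ih]
    have z2 : (contK 1 0 (fun j => X + C (a j)) b (n+2)).coeff (n+1) = 0 :=
      coeff_eq_zero_of_degree_lt hd2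
    have z1 : (contK 1 0 (fun j => X + C (a j)) b (n+1)).coeff (n+1) = 0 :=
      coeff_eq_zero_of_degree_lt hd1
    rw [coeff_C_mul, z2, coeff_C_mul, z1]
    ring

lemma pev_mul (p q : Polynomial F) : pev (p * q) = pev p * pev q := by simp [pev]

lemma pev_sub (p q : Polynomial F) : pev (p - q) = pev p - pev q := by simp [pev]

lemma happrox {g : LaurentSeries F} {α β : ℕ → F}
    (hconv : ∀ n : ℕ,
      degB (g - pev (cfPab α β (n + 1)) / pev (cfQab α β (n + 1))) ≤
        (((-(2 * (n : ℤ) + 1)) : ℤ) : WithBot ℤ)) (n : ℕ) :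
    degB (pev (cfQab α β (n+1)) * g - pev (cfPab α β (n+1))) ≤
      (((-(n:ℤ)-1) : ℤ) : WithBot ℤ) := by
  have hq : (cfQab α β (n+1)) ≠ 0 := (cfQab_spec α β n).1.ne_zero
  have hq' : pev (cfQab α β (n+1)) ≠ 0 := pev_ne_zero hq
  have e : pev (cfQab α β (n+1)) * g - pev (cfPab α β (n+1))
      = pev (cfQab α β (n+1)) * (g - pev (cfPab α β (n+1)) / pev (cfQab α β (n+1))) := by
    field_simp
  rw [e]
  have h1 : degB (pev (cfQab α β (n+1))) ≤ ((n : ℤ) : WithBot ℤ) := by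
    have h := degB_pev_le (cfQab α β (n+1))
    rwa [cfQab_natDegree] at h
  have h3 := degB_mul_le h1 (hconv n)
  have h4 : ((n : ℤ) + (-(2 * (n:ℤ) + 1)) : ℤ) = (-(n:ℤ)-1 : ℤ) := by ring
  rwa [h4] at h3

lemma cross {g : LaurentSeries F} (p q p' q' : Polynomial F) (n : ℕ)
    (hq : q.natDegree ≤ n) (hq' : q'.natDegree ≤ n)
    (h1 : degB (pev q * g - pev p) ≤ (((-(n:ℤ)-1) : ℤ) : WithBot ℤ))
    (h2 : degB (pev q' * g - pev p') ≤ (((-(n:ℤ)-1) : ℤ) : WithBot ℤ)) :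
    p * q' = p' * q := by
  have key : pev (p * q' - p' * q)
      = pev q' * (-(pev q * g - pev p)) + pev q * (pev q' * g - pev p') := by
    rw [pev_sub, pev_mul, pev_mul]
    ring
  have hqB : degB (pev q) ≤ ((n : ℤ) : WithBot ℤ) :=
    le_trans (degB_pev_le q) (by exact_mod_cast hq)
  have hq'B : degB (pev q') ≤ ((n : ℤ) : WithBot ℤ) :=
    le_trans (degB_pev_le q') (by exact_mod_cast hq')
  have t1 := degB_mul_le hq'B (degB_neg_le h1)
  have t2 := degB_mul_le hqB h2
  have hval : ((n:ℤ) + (-(n:ℤ)-1) : ℤ) = (-1 : ℤ) := by ring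
  rw [hval] at t1 t2
  have hD : degB (pev (p * q' - p' * q)) ≤ ((-1 : ℤ) : WithBot ℤ) := by
    rw [key]
    exact degB_add_le t1 t2
  have := eq_zero_of_degB_pev hD
  exact sub_eq_zero.mp this

lemma lsubst_neg {d : ℕ} (hd : 0 < d) (f : LaurentSeries F) :
    lsubst d (-f) = - lsubst d f := by
  have h := lsubst_add hd f (-f)
  simp only [add_neg_cancel] at h
  have h0 : lsubst d (0 : LaurentSeries F) = 0 := by
    simp [lsubst, dif_pos hd]
  rw [h0] at h
  exact eq_neg_of_add_eq_zero_right h.symm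

lemma lsubst_sub {d : ℕ} (hd : 0 < d) (f g : LaurentSeries F) :
    lsubst d (f - g) = lsubst d f - lsubst d g := by
  rw [sub_eq_add_neg, lsubst_add hd, lsubst_neg hd, sub_eq_add_neg]


/-- Let `g ∈ F((x⁻¹))` satisfy `P*(x) g(x^d) = g(x)` with `P*` monic
of degree `d-1`, `d ≥ 2`, and suppose `g` is badly approximable with all partial
quotients linear: `g = K_{i≥1} β_i/(x + α_i)` (so the `n`-th convergent approximates `g`
to order `< -2n`).  Then for every `k ≥ 0`,
`K¹_d(a_{dk+1},…,a_{d(k+1)}; β_{dk+1},…,β_{d(k+1)}) = β_{dk+1} P*(x)`,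
where `a_i(x) = x + α_i`. -/
theorem continuant_identity_badly_approximable (d : ℕ) (hd : 2 ≤ d)
    (Pstar : Polynomial F) (hmonic : Pstar.Monic) (hPdeg : Pstar.natDegree = d - 1)
    (g : LaurentSeries F) (hfe : pev Pstar * lsubst d g = g)
    (α β : ℕ → F) (hβ : ∀ n, 1 ≤ n → β n ≠ 0)
    (hconv : ∀ n : ℕ,
      degB (g - pev (cfPab α β (n + 1)) / pev (cfQab α β (n + 1))) ≤
        (((-(2 * (n : ℤ) + 1)) : ℤ) : WithBot ℤ)) :
    ∀ k : ℕ,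
      contK 1 0 (fun j => Polynomial.X + Polynomial.C (α (d * k + j)))
          (fun j => β (d * k + j)) (d + 1) =
        Polynomial.C (β (d * k + 1)) * Pstar := by
  have hd0 : 0 < d := by omega
  have hstep : ∀ k : ℕ, cfPab α β (d*k+1) = Pstar * ((cfPab α β (k+1)).comp (X ^ d)) := by
    intro k
    have hQnd : ((cfQab α β (k+1)).comp (X ^ d)).natDegree = d * k := by
      rw [natDegree_comp, cfQab_natDegree, natDegree_X_pow, Nat.mul_comm]
    have hls := lsubst_degB_le hd0 (happrox hconv k)
    have hPB : degB (pev Pstar) ≤ (((d:ℤ)-1 : ℤ) : WithBot ℤ) := by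
      have h := degB_pev_le Pstar
      rw [hPdeg] at h
      have e : ((d - 1 : ℕ) : ℤ) = (d:ℤ) - 1 := by omega
      rwa [e] at h
    have hmul := degB_mul_le hPB hls
    have hid : pev ((cfQab α β (k+1)).comp (X ^ d)) * g
          - pev (Pstar * ((cfPab α β (k+1)).comp (X ^ d)))
        = pev Pstar * lsubst d (pev (cfQab α β (k+1)) * g - pev (cfPab α β (k+1))) := by
      conv_lhs => rw [← hfe]
      rw [pev_mul, ← lsubst_pev hd0, ← lsubst_pev hd0, lsubst_sub hd0, lsubst_mul hd0]
      ring
    have h2 : degB (pev ((cfQab α β (k+1)).comp (X ^ d)) * g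
          - pev (Pstar * ((cfPab α β (k+1)).comp (X ^ d))))
        ≤ (((-((d*k : ℕ) : ℤ)-1) : ℤ) : WithBot ℤ) := by
      rw [hid]
      have hval : ((((d:ℤ)-1) + (d:ℤ) * (-(k:ℤ)-1)) : ℤ) = (-((d*k : ℕ) : ℤ)-1 : ℤ) := by
        push_cast
        ring
      rwa [hval] at hmul
    have hcross := cross (g := g) (cfPab α β (d*k+1)) (cfQab α β (d*k+1))
      (Pstar * ((cfPab α β (k+1)).comp (X ^ d))) ((cfQab α β (k+1)).comp (X ^ d)) (d*k)
      (le_of_eq (cfQab_natDegree α β (d*k))) (le_of_eq hQnd) (happrox hconv (d*k)) h2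
    have hdvd : cfQab α β (d*k+1) ∣ (cfQab α β (k+1)).comp (X ^ d) :=
      ((coprime_PQ α β hβ (d*k)).symm).dvd_of_dvd_mul_left
        ⟨Pstar * ((cfPab α β (k+1)).comp (X ^ d)), hcross.trans (mul_comm _ _)⟩
    have hQcm : ((cfQab α β (k+1)).comp (X ^ d)).Monic :=
      ((cfQab_spec α β k).1).comp (monic_X_pow d) (by rw [natDegree_X_pow]; omega)
    have heq : (cfQab α β (k+1)).comp (X ^ d) = cfQab α β (d*k+1) :=
      Polynomial.eq_of_monic_of_dvd_of_natDegree_le (cfQab_spec α β (d*k)).1 hQcm hdvd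
        (by rw [hQnd, cfQab_natDegree])
    rw [heq] at hcross
    exact mul_right_cancel₀ ((cfQab_spec α β (d*k)).1.ne_zero) hcross
  intro k
  set K1 : Polynomial F :=
    contK 1 0 (fun j => Polynomial.X + Polynomial.C (α (d * k + j)))
      (fun j => β (d * k + j)) (d + 1) with hK1def
  set K0 : Polynomial F :=
    contK 0 1 (fun j => Polynomial.X + Polynomial.C (α (d * k + j)))
      (fun j => β (d * k + j)) (d + 1) with hK0def
  have hsplit := contK_split α β (d*k) d
  rw [show d*k+1+d = d*(k+1)+1 from by ring] at hsplit
  rw [hstep (k+1), hstep k] at hsplit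
  rw [← hK1def, ← hK0def] at hsplit
  have hdvd1 : Pstar ∣ K1 * cfPab α β (d*k) :=
    ⟨((cfPab α β (k+1+1)).comp (X ^ d)) - K0 * ((cfPab α β (k+1)).comp (X ^ d)), by
      linear_combination -hsplit⟩
  have hcopP : IsCoprime Pstar (cfPab α β (d*k)) :=
    IsCoprime.of_isCoprime_of_dvd_left (coprime_PP α β hβ (d*k))
      ⟨(cfPab α β (k+1)).comp (X ^ d), hstep k⟩
  obtain ⟨t, ht⟩ := hcopP.dvd_of_dvd_mul_right hdvd1
  have hcoef : K1.coeff (d-1) = β (d*k+1) := by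
    have h := contK10_coeff (fun j => α (d*k+j)) (fun j => β (d*k+j)) (d-1)
    rw [show d-1+2 = d+1 from by omega] at h
    exact h
  have hdeg : K1.degree < ((d : ℕ) : WithBot ℕ) :=
    contK10_deg (fun j => α (d*k+j)) (fun j => β (d*k+j)) d
  have hK1ne : K1 ≠ 0 := by
    intro h0
    rw [h0, Polynomial.coeff_zero] at hcoef
    exact hβ (d*k+1) (by omega) hcoef.symm
  have htne : t ≠ 0 := by
    rintro rfl
    rw [mul_zero] at ht
    exact hK1ne ht
  have hndK : K1.natDegree ≤ d - 1 := by
    have h := (natDegree_lt_iff_degree_lt hK1ne).mpr hdeg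
    omega
  have hnd : K1.natDegree = Pstar.natDegree + t.natDegree := by
    rw [ht, natDegree_mul hmonic.ne_zero htne]
  have hnt : t.natDegree = 0 := by omega
  obtain ⟨c, hc⟩ := natDegree_eq_zero.mp hnt
  have hcc : c = β (d*k+1) := by
    rw [← hcoef, ht, ← hc, Polynomial.coeff_mul_C,
      show Pstar.coeff (d-1) = 1 from by rw [← hPdeg]; exact hmonic.coeff_natDegree, one_mul]
  rw [ht, ← hc, hcc]
  ring


end
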